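/- Let A be a real M×N matrix such that AA* is invertible, with δ_k(A) < 1. Suppose y = Ax + e where x ∈ ℝ^N is s-sparse and e ∈ ℝ^M, with k ≥ s, and let λ > 0. Let μ^{k−1} ∈ ℝ^N be (k−1)-sparse, set x^k = μ^{k−1} + A*(AA*)⁻¹(y − Aμ^{k−1}), let T_k be an index set of k largest absolute entries of x^k, and let μ^k be the vector supported on T_k defined by μ^k = (x^k)_{T_k} + λ⁻¹·[A*(y − A(x^k)_{T_k})]_{T_k}. Then ‖x − μ^k‖₂ ≤ 2√2·γ_{2k+s−1}(A)·(1 + (1+δ_k(A))√(1+δ_{s+k}(A))/(λ√(1−δ_k(A)))) · ‖x − μ^{k−1}‖₂ + [(1 + (1+δ_k(A))√(1+δ_{s+k}(A))/(λ√(1−δ_k(A))))·(√(2+2θ_{k+s}(A)) + √(1+θ_k(A))) + (1+δ_k(A))/(λ√(1−δ_k(A)))] · ‖e‖₂. -/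

import Mathlib

open Matrix

/-- The Euclidean (ℓ²) norm of a vector in ℝⁿ. -/
noncomputable def norm2 {n : ℕ} (x : Fin n → ℝ) : ℝ := Real.sqrt (∑ i, x i ^ 2)

/-- `x` is `s`-sparse: it has at most `s` nonzero entries. -/
def sparse {n : ℕ} (s : ℕ) (x : Fin n → ℝ) : Prop :=
  (Finset.univ.filter fun i => x i ≠ 0).card ≤ s

/-- `restrict T x` is the vector agreeing with `x` on `T` and zero outside `T`. -/
def restrict {n : ℕ} (T : Finset (Fin n)) (x : Fin n → ℝ) : Fin n → ℝ :=
  fun i => if i ∈ T then x i else 0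

/-- The preconditioned matrix `(AAᴴ)^{-1/2} A`, where `(AAᴴ)^{-1/2}` is the inverse of the
positive semidefinite square root of `AAᴴ`. -/
noncomputable def precond {M N : ℕ} (A : Matrix (Fin M) (Fin N) ℝ) :
    Matrix (Fin M) (Fin N) ℝ :=
  ((Matrix.posSemidef_self_mul_conjTranspose A).isHermitian.eigenvectorUnitary.1 *
      Matrix.diagonal ((↑) ∘ (√·) ∘ (Matrix.posSemidef_self_mul_conjTranspose A).isHermitian.eigenvalues) *
      (star (Matrix.posSemidef_self_mul_conjTranspose A).isHermitian.eigenvectorUnitary :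
        Matrix (Fin M) (Fin M) ℝ))⁻¹ * A

/-- The preconditioned restricted isometry constant `γ_s(A)`: the smallest `γ ≥ 0` such that
`(1-γ)‖x‖₂² ≤ ‖(AAᴴ)^{-1/2}Ax‖₂²` for all `s`-sparse `x`. -/
noncomputable def pripConst {M N : ℕ} (A : Matrix (Fin M) (Fin N) ℝ) (s : ℕ) : ℝ :=
  sInf {γ : ℝ | 0 ≤ γ ∧ ∀ x : Fin N → ℝ, sparse s x →
    (1 - γ) * norm2 x ^ 2 ≤ norm2 ((precond A).mulVec x) ^ 2}

/-- The restricted isometry constant `δ_s(B)`: the smallest `δ ≥ 0` such that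
`(1-δ)‖x‖₂² ≤ ‖Bx‖₂² ≤ (1+δ)‖x‖₂²` for all `s`-sparse `x`. -/
noncomputable def ripConst {m n : ℕ} (B : Matrix (Fin m) (Fin n) ℝ) (s : ℕ) : ℝ :=
  sInf {δ : ℝ | 0 ≤ δ ∧ ∀ x : Fin n → ℝ, sparse s x →
    (1 - δ) * norm2 x ^ 2 ≤ norm2 (B.mulVec x) ^ 2 ∧
      norm2 (B.mulVec x) ^ 2 ≤ (1 + δ) * norm2 x ^ 2}

/-- `θ_t(A) = δ_t((AAᴴ)⁻¹A)`. -/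
noncomputable def thetaConst {M N : ℕ} (A : Matrix (Fin M) (Fin N) ℝ) (t : ℕ) : ℝ :=
  ripConst ((A * Aᴴ)⁻¹ * A) t


namespace S9


variable {n : ℕ}

lemma sum_sq_nonneg (x : Fin n → ℝ) : (0:ℝ) ≤ ∑ i, x i ^ 2 :=
  Finset.sum_nonneg fun _ _ => sq_nonneg _

lemma norm2_nonneg (x : Fin n → ℝ) : 0 ≤ norm2 x := Real.sqrt_nonneg _

lemma norm2_sq (x : Fin n → ℝ) : norm2 x ^ 2 = ∑ i, x i ^ 2 :=
  Real.sq_sqrt (sum_sq_nonneg x)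

lemma norm2_sq_dot (x : Fin n → ℝ) : norm2 x ^ 2 = x ⬝ᵥ x := by
  rw [norm2_sq]; simp [dotProduct, sq]

lemma dot_le (x y : Fin n → ℝ) : x ⬝ᵥ y ≤ norm2 x * norm2 y := by
  simpa [dotProduct, norm2] using
    Real.sum_mul_le_sqrt_mul_sqrt Finset.univ x y

lemma norm2_eq_zero {x : Fin n → ℝ} (h : norm2 x = 0) : x = 0 := by
  have h2 : ∑ i, x i ^ 2 = 0 := by
    have := norm2_sq x; rw [h] at this; simpa using this.symm
  funext i
  have := (Finset.sum_eq_zero_iff_of_nonneg (fun i _ => sq_nonneg (x i))).1 h2 i (by simp)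
  exact pow_eq_zero_iff two_ne_zero |>.1 this

lemma dot_expand (x y : Fin n → ℝ) :
    ∑ i, (x i + y i) ^ 2 = (∑ i, x i ^ 2) + 2 * (x ⬝ᵥ y) + ∑ i, y i ^ 2 := by
  simp only [dotProduct, add_sq, Finset.sum_add_distrib, Finset.mul_sum]
  ring_nf

lemma norm2_add_le (x y : Fin n → ℝ) : norm2 (x + y) ≤ norm2 x + norm2 y := by
  have h1 : ∑ i, (x i + y i) ^ 2 ≤ (norm2 x + norm2 y) ^ 2 := by
    rw [dot_expand]
    have hd := dot_le x y
    have hx := norm2_sq x; have hy := norm2_sq y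
    nlinarith
  calc norm2 (x + y) = Real.sqrt (∑ i, (x i + y i) ^ 2) := by simp [norm2]
    _ ≤ Real.sqrt ((norm2 x + norm2 y) ^ 2) := Real.sqrt_le_sqrt h1
    _ = norm2 x + norm2 y := Real.sqrt_sq (add_nonneg (norm2_nonneg x) (norm2_nonneg y))

lemma norm2_smul (c : ℝ) (x : Fin n → ℝ) : norm2 (c • x) = |c| * norm2 x := by
  simp only [norm2, Pi.smul_apply, smul_eq_mul, mul_pow]
  rw [← Finset.mul_sum, Real.sqrt_mul (sq_nonneg c), Real.sqrt_sq_eq_abs]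

lemma norm2_neg (x : Fin n → ℝ) : norm2 (-x) = norm2 x := by
  simp [norm2]

lemma norm2_le_of_dot {g : Fin n → ℝ} {c : ℝ} (hc : 0 ≤ c)
    (h : norm2 g ^ 2 ≤ c * norm2 g) : norm2 g ≤ c := by
  rcases eq_or_lt_of_le (norm2_nonneg g) with h0 | h0
  · linarith
  · nlinarith


variable {n : ℕ}

lemma sparse_of_subset {x : Fin n → ℝ} {U : Finset (Fin n)} {s : ℕ}
    (h : ∀ i, x i ≠ 0 → i ∈ U) (hU : U.card ≤ s) : sparse s x := by
  refine le_trans (Finset.card_le_card ?_) hU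
  intro i hi
  simp only [Finset.mem_filter] at hi
  exact h i hi.2

lemma sparse_restrict {s : ℕ} (T : Finset (Fin n)) (x : Fin n → ℝ) (hT : T.card ≤ s) :
    sparse s (restrict T x) := by
  refine sparse_of_subset (fun i hi => ?_) hT
  by_contra h
  simp [restrict, h] at hi

-- The sInf helper
lemma le_sInf_mul {S : Set ℝ} (hne : S.Nonempty) {c a : ℝ} (hc : 0 ≤ c)
    (ha : c = 0 → a ≤ 0) (h : ∀ δ ∈ S, a ≤ δ * c) : a ≤ sInf S * c := by
  rcases eq_or_lt_of_le hc with h0 | h0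
  · rw [← h0, mul_zero]; exact ha h0.symm
  · have h1 : a / c ≤ sInf S := by
      refine le_csInf hne fun δ hδ => ?_
      rw [div_le_iff₀ h0]
      exact h δ hδ
    calc a = a / c * c := by field_simp
      _ ≤ sInf S * c := mul_le_mul_of_nonneg_right h1 hc


variable {m : ℕ}

lemma norm2_sq' (x : Fin n → ℝ) : norm2 x ^ 2 = ∑ i, x i ^ 2 :=
  Real.sq_sqrt (Finset.sum_nonneg fun _ _ => sq_nonneg _)

lemma mulVec_sq_le (B : Matrix (Fin m) (Fin n) ℝ) (x : Fin n → ℝ) :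
    norm2 (B.mulVec x) ^ 2 ≤ (∑ i, ∑ j, B i j ^ 2) * norm2 x ^ 2 := by
  rw [norm2_sq', norm2_sq', Finset.sum_mul]
  refine Finset.sum_le_sum fun i _ => ?_
  simpa [Matrix.mulVec, dotProduct] using
    Finset.sum_mul_sq_le_sq_mul_sq Finset.univ (fun j => B i j) x

lemma ripSet_nonempty (B : Matrix (Fin m) (Fin n) ℝ) (s : ℕ) :
    {δ : ℝ | 0 ≤ δ ∧ ∀ x : Fin n → ℝ, sparse s x →
    (1 - δ) * norm2 x ^ 2 ≤ norm2 (B.mulVec x) ^ 2 ∧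
      norm2 (B.mulVec x) ^ 2 ≤ (1 + δ) * norm2 x ^ 2}.Nonempty := by
  set F := ∑ i, ∑ j, B i j ^ 2 with hF
  have hF0 : 0 ≤ F := Finset.sum_nonneg fun _ _ => Finset.sum_nonneg fun _ _ => sq_nonneg _
  refine ⟨1 + F, by positivity, fun x _ => ⟨?_, ?_⟩⟩
  · have : (1 - (1 + F)) * norm2 x ^ 2 ≤ 0 := by nlinarith [sq_nonneg (norm2 x)]
    exact this.trans (sq_nonneg _)
  · refine (mulVec_sq_le B x).trans ?_
    nlinarith [sq_nonneg (norm2 x)]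

lemma ripConst_nonneg (B : Matrix (Fin m) (Fin n) ℝ) (s : ℕ) : 0 ≤ ripConst B s :=
  le_csInf (ripSet_nonempty B s) fun _ hδ => hδ.1

lemma rip_lower (B : Matrix (Fin m) (Fin n) ℝ) {s : ℕ} {x : Fin n → ℝ} (hx : sparse s x) :
    (1 - ripConst B s) * norm2 x ^ 2 ≤ norm2 (B.mulVec x) ^ 2 := by
  have h := le_sInf_mul (ripSet_nonempty B s) (c := norm2 x ^ 2)
    (a := norm2 x ^ 2 - norm2 (B.mulVec x) ^ 2) (sq_nonneg _)
    (fun h0 => by nlinarith [sq_nonneg (norm2 (B.mulVec x))])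
    (fun δ hδ => by nlinarith [(hδ.2 x hx).1])
  rw [ripConst]; nlinarith [h]

lemma rip_upper (B : Matrix (Fin m) (Fin n) ℝ) {s : ℕ} {x : Fin n → ℝ} (hx : sparse s x) :
    norm2 (B.mulVec x) ^ 2 ≤ (1 + ripConst B s) * norm2 x ^ 2 := by
  have hz : norm2 x ^ 2 = 0 → norm2 (B.mulVec x) ^ 2 - norm2 x ^ 2 ≤ 0 := by
    intro h0
    have : x = 0 := norm2_eq_zero (by
      have := Real.sqrt_nonneg (∑ i, x i ^ 2); nlinarith [norm2_nonneg x])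
    subst this
    simp [Matrix.mulVec_zero, norm2]
  have h := le_sInf_mul (ripSet_nonempty B s) (c := norm2 x ^ 2)
    (a := norm2 (B.mulVec x) ^ 2 - norm2 x ^ 2) (sq_nonneg _) hz
    (fun δ hδ => by nlinarith [(hδ.2 x hx).2])
  rw [ripConst]; nlinarith [h]


section Chunk2
variable {Mm Nn : ℕ}

lemma pripSet_nonempty (A : Matrix (Fin Mm) (Fin Nn) ℝ) (s : ℕ) :
    {γ : ℝ | 0 ≤ γ ∧ ∀ x : Fin Nn → ℝ, sparse s x →
      (1 - γ) * norm2 x ^ 2 ≤ norm2 ((precond A).mulVec x) ^ 2}.Nonempty :=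
  ⟨1, le_of_eq rfl |>.trans zero_le_one, fun x _ => by
    simpa using sq_nonneg (norm2 ((precond A).mulVec x))⟩

lemma pripConst_nonneg (A : Matrix (Fin Mm) (Fin Nn) ℝ) (s : ℕ) : 0 ≤ pripConst A s :=
  le_csInf (pripSet_nonempty A s) fun _ hδ => hδ.1

lemma prip_lower (A : Matrix (Fin Mm) (Fin Nn) ℝ) {s : ℕ} {x : Fin Nn → ℝ} (hx : sparse s x) :
    (1 - pripConst A s) * norm2 x ^ 2 ≤ norm2 ((precond A).mulVec x) ^ 2 := by
  have h := le_sInf_mul (pripSet_nonempty A s) (c := norm2 x ^ 2)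
    (a := norm2 x ^ 2 - norm2 ((precond A).mulVec x) ^ 2) (sq_nonneg _)
    (fun h0 => by nlinarith [sq_nonneg (norm2 ((precond A).mulVec x))])
    (fun γ hγ => by nlinarith [hγ.2 x hx])
  rw [pripConst]; nlinarith [h]

-- adjoint lemmas
lemma adj_dot {a b : ℕ} (M : Matrix (Fin a) (Fin b) ℝ) (u : Fin a → ℝ) (g : Fin b → ℝ) :
    (Mᴴ.mulVec u) ⬝ᵥ g = u ⬝ᵥ (M.mulVec g) := by
  rw [Matrix.conjTranspose_eq_transpose_of_trivial, Matrix.mulVec_transpose,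
    Matrix.dotProduct_mulVec]

lemma dot_adj {a b : ℕ} (M : Matrix (Fin a) (Fin b) ℝ) (g : Fin b → ℝ) (u : Fin a → ℝ) :
    (M.mulVec g) ⬝ᵥ u = g ⬝ᵥ (Mᴴ.mulVec u) := by
  rw [dotProduct_comm, ← adj_dot, dotProduct_comm]

section Proj
variable (A : Matrix (Fin Mm) (Fin Nn) ℝ)

lemma G_herm : (A * Aᴴ)ᴴ = A * Aᴴ := by
  rw [Matrix.conjTranspose_mul, Matrix.conjTranspose_conjTranspose]

lemma Ginv_herm : ((A * Aᴴ)⁻¹)ᴴ = (A * Aᴴ)⁻¹ := by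
  rw [Matrix.conjTranspose_nonsing_inv, G_herm]

lemma P_herm : (Aᴴ * (A * Aᴴ)⁻¹ * A)ᴴ = Aᴴ * (A * Aᴴ)⁻¹ * A := by
  rw [Matrix.conjTranspose_mul, Matrix.conjTranspose_mul,
    Matrix.conjTranspose_conjTranspose, Ginv_herm, ← Matrix.mul_assoc]

lemma P_idem (hA : IsUnit (A * Aᴴ).det) :
    (Aᴴ * (A * Aᴴ)⁻¹ * A) * (Aᴴ * (A * Aᴴ)⁻¹ * A) = Aᴴ * (A * Aᴴ)⁻¹ * A := by
  have h1 : (A * Aᴴ)⁻¹ * (A * Aᴴ) = 1 := Matrix.nonsing_inv_mul _ hA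
  rw [show (Aᴴ * (A * Aᴴ)⁻¹ * A) * (Aᴴ * (A * Aᴴ)⁻¹ * A)
      = Aᴴ * ((A * Aᴴ)⁻¹ * (A * Aᴴ)) * ((A * Aᴴ)⁻¹ * A) by
    simp only [Matrix.mul_assoc], h1, Matrix.mul_one, ← Matrix.mul_assoc]

lemma psd_sqrt_props {m : ℕ} {G : Matrix (Fin m) (Fin m) ℝ} (hP : G.PosSemidef) :
    (hP.isHermitian.eigenvectorUnitary.1 * Matrix.diagonal ((↑) ∘ (√·) ∘ hP.isHermitian.eigenvalues) *
      (star hP.isHermitian.eigenvectorUnitary : Matrix (Fin m) (Fin m) ℝ))ᴴ = (hP.isHermitian.eigenvectorUnitary.1 * Matrix.diagonal ((↑) ∘ (√·) ∘ hP.isHermitian.eigenvalues) *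
      (star hP.isHermitian.eigenvectorUnitary : Matrix (Fin m) (Fin m) ℝ)) ∧ (hP.isHermitian.eigenvectorUnitary.1 * Matrix.diagonal ((↑) ∘ (√·) ∘ hP.isHermitian.eigenvalues) *
      (star hP.isHermitian.eigenvectorUnitary : Matrix (Fin m) (Fin m) ℝ)) * (hP.isHermitian.eigenvectorUnitary.1 * Matrix.diagonal ((↑) ∘ (√·) ∘ hP.isHermitian.eigenvalues) *
      (star hP.isHermitian.eigenvectorUnitary : Matrix (Fin m) (Fin m) ℝ)) = G := by
  set U := hP.isHermitian.eigenvectorUnitary with hU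
  refine ⟨?_, ?_⟩
  · rw [Matrix.conjTranspose_mul, Matrix.conjTranspose_mul, Matrix.diagonal_conjTranspose]
    simp only [← Matrix.star_eq_conjTranspose, star_star]
    rw [← Matrix.mul_assoc]
    congr 3
  · have hUU : (star U : Matrix (Fin m) (Fin m) ℝ) * U.1 = 1 := Unitary.coe_star_mul_self U
    have hDD : Matrix.diagonal ((fun x : ℝ => x) ∘ (√·) ∘ hP.isHermitian.eigenvalues) *
        Matrix.diagonal ((fun x : ℝ => x) ∘ (√·) ∘ hP.isHermitian.eigenvalues)
        = Matrix.diagonal (RCLike.ofReal ∘ hP.isHermitian.eigenvalues) := by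
      rw [Matrix.diagonal_mul_diagonal]
      congr 1
      funext i
      simp only [Function.comp_apply]
      rw [Real.mul_self_sqrt (hP.eigenvalues_nonneg i)]
      rfl
    have hsp := hP.isHermitian.spectral_theorem
    rw [Unitary.conjStarAlgAut_apply] at hsp
    conv_rhs => rw [hsp]
    rw [← hDD]
    simp only [Matrix.mul_assoc]
    rw [← Matrix.mul_assoc (star U : Matrix (Fin m) (Fin m) ℝ) U.1, hUU, Matrix.one_mul]

lemma precond_sqrt_props :
    ∃ S : Matrix (Fin Mm) (Fin Mm) ℝ, precond A = S⁻¹ * A ∧ Sᴴ = S ∧ S * S = A * Aᴴ :=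
  ⟨_, rfl, psd_sqrt_props (Matrix.posSemidef_self_mul_conjTranspose A)⟩

lemma precond_adj_mul : (precond A)ᴴ * precond A = Aᴴ * (A * Aᴴ)⁻¹ * A := by
  obtain ⟨S, hpre, hSh, hSS⟩ := precond_sqrt_props A
  rw [hpre, Matrix.conjTranspose_mul, Matrix.conjTranspose_nonsing_inv, hSh]
  calc Aᴴ * S⁻¹ * (S⁻¹ * A) = Aᴴ * ((S⁻¹ * S⁻¹) * A) := by
        rw [Matrix.mul_assoc Aᴴ S⁻¹ (S⁻¹ * A), ← Matrix.mul_assoc S⁻¹ S⁻¹ A]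
    _ = Aᴴ * (A * Aᴴ)⁻¹ * A := by rw [← Matrix.mul_inv_rev, hSS, ← Matrix.mul_assoc]

lemma norm2_precond_sq (x : Fin Nn → ℝ) :
    norm2 ((precond A).mulVec x) ^ 2 = x ⬝ᵥ ((Aᴴ * (A * Aᴴ)⁻¹ * A).mulVec x) := by
  rw [norm2_sq_dot, dot_adj, Matrix.mulVec_mulVec, precond_adj_mul]

lemma norm2_P_sq (hA : IsUnit (A * Aᴴ).det) (x : Fin Nn → ℝ) :
    norm2 ((Aᴴ * (A * Aᴴ)⁻¹ * A).mulVec x) ^ 2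
      = x ⬝ᵥ ((Aᴴ * (A * Aᴴ)⁻¹ * A).mulVec x) := by
  rw [norm2_sq_dot, dot_adj, Matrix.mulVec_mulVec, P_herm, P_idem A hA]

end Proj
end Chunk2

section Chunk3
variable {n : ℕ}

lemma dot_expand_sub (x y : Fin n → ℝ) :
    ∑ i, (x i - y i) ^ 2 = (∑ i, x i ^ 2) - 2 * (x ⬝ᵥ y) + ∑ i, y i ^ 2 := by
  simp only [dotProduct, sub_sq, Finset.sum_add_distrib, Finset.sum_sub_distrib,
    Finset.mul_sum]
  ring_nf

lemma norm2_sq_comb (c d : ℝ) (p q : Fin n → ℝ) :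
    norm2 (c • p + d • q) ^ 2
      = c ^ 2 * norm2 p ^ 2 + 2 * c * d * (p ⬝ᵥ q) + d ^ 2 * norm2 q ^ 2 := by
  rw [norm2_sq, norm2_sq, norm2_sq]
  simp only [Pi.add_apply, Pi.smul_apply, smul_eq_mul, dotProduct]
  rw [Finset.mul_sum, Finset.mul_sum, Finset.mul_sum, ← Finset.sum_add_distrib,
    ← Finset.sum_add_distrib]
  exact Finset.sum_congr rfl fun i _ => by ring

lemma norm2_sub_sq (p q : Fin n → ℝ) :
    norm2 (p - q) ^ 2 = norm2 p ^ 2 - 2 * (p ⬝ᵥ q) + norm2 q ^ 2 := by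
  rw [norm2_sq, norm2_sq, norm2_sq]
  exact dot_expand_sub p q

lemma norm2_restrict_sq (T : Finset (Fin n)) (z : Fin n → ℝ) :
    norm2 (restrict T z) ^ 2 = ∑ i ∈ T, z i ^ 2 := by
  rw [norm2_sq]
  simp only [restrict]
  rw [Finset.sum_congr rfl fun i _ => (by split <;> simp :
    (if i ∈ T then z i else 0) ^ 2 = if i ∈ T then z i ^ 2 else 0)]
  rw [Finset.sum_ite_mem, Finset.univ_inter]

lemma dot_restrict (z w : Fin n → ℝ) (T : Finset (Fin n)) :
    z ⬝ᵥ restrict T w = ∑ i ∈ T, z i * w i := by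
  simp only [dotProduct, restrict, mul_ite, mul_zero]
  rw [Finset.sum_ite_mem, Finset.univ_inter]

lemma dot_self_restrict (z : Fin n → ℝ) (T : Finset (Fin n)) :
    z ⬝ᵥ restrict T z = norm2 (restrict T z) ^ 2 := by
  rw [dot_restrict, norm2_restrict_sq]
  exact Finset.sum_congr rfl fun i _ => (sq (z i)).symm

lemma norm2_restrict_le (T : Finset (Fin n)) (z : Fin n → ℝ) :
    norm2 (restrict T z) ≤ norm2 z := by
  apply Real.sqrt_le_sqrt
  refine Finset.sum_le_sum fun i _ => ?_
  simp only [restrict]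
  split
  · exact le_refl _
  · simpa using sq_nonneg (z i)

variable {Mm Nn : ℕ} (A : Matrix (Fin Mm) (Fin Nn) ℝ)

lemma proj_defect_sq (hA : IsUnit (A * Aᴴ).det) {t : ℕ} {v : Fin Nn → ℝ}
    (hv : sparse t v) :
    norm2 (v - (Aᴴ * (A * Aᴴ)⁻¹ * A).mulVec v) ^ 2 ≤ pripConst A t * norm2 v ^ 2 := by
  have h1 := norm2_sub_sq v ((Aᴴ * (A * Aᴴ)⁻¹ * A).mulVec v)
  have h2 := norm2_P_sq A hA v
  have h3 := norm2_precond_sq A v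
  have h4 := prip_lower A hv
  nlinarith [h4]

lemma proj_cross (hA : IsUnit (A * Aᴴ).det) {t : ℕ} {a b : Fin Nn → ℝ}
    (hab : ∀ c d : ℝ, sparse t (c • a + d • b)) :
    (a - (Aᴴ * (A * Aᴴ)⁻¹ * A).mulVec a) ⬝ᵥ (b - (Aᴴ * (A * Aᴴ)⁻¹ * A).mulVec b)
      ≤ pripConst A t * (norm2 a * norm2 b) := by
  set P := Aᴴ * (A * Aᴴ)⁻¹ * A with hP
  set γ := pripConst A t with hγ
  have hγ0 : 0 ≤ γ := pripConst_nonneg A t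
  rcases eq_or_lt_of_le (norm2_nonneg a) with ha0 | ha0
  · have : a = 0 := norm2_eq_zero ha0.symm
    subst this
    have hz : norm2 (0 : Fin Nn → ℝ) = 0 := by simp [norm2]
    have : (fun i => (0:ℝ)) = (0 : Fin Nn → ℝ) := rfl
    simp [Matrix.mulVec_zero, hz, mul_nonneg, hγ0, norm2_nonneg]
  rcases eq_or_lt_of_le (norm2_nonneg b) with hb0 | hb0
  · have : b = 0 := norm2_eq_zero hb0.symm
    subst this
    have hz : norm2 (0 : Fin Nn → ℝ) = 0 := by simp [norm2]
    simp [Matrix.mulVec_zero, hz, mul_nonneg, hγ0, norm2_nonneg]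
  set wa := a - P.mulVec a with hwa
  set wb := b - P.mulVec b with hwb
  have hlin : ∀ c d : ℝ, (c • a + d • b) - P.mulVec (c • a + d • b) = c • wa + d • wb := by
    intro c d
    rw [hwa, hwb, Matrix.mulVec_add, Matrix.mulVec_smul, Matrix.mulVec_smul]
    ext i
    simp [smul_sub]
    ring
  have key : norm2 ((norm2 b • a + norm2 a • b) - P.mulVec (norm2 b • a + norm2 a • b)) ^ 2
      ≤ γ * norm2 (norm2 b • a + norm2 a • b) ^ 2 :=
    proj_defect_sq A hA (hab (norm2 b) (norm2 a))
  rw [hlin (norm2 b) (norm2 a), norm2_sq_comb (norm2 b) (norm2 a) wa wb] at key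
  have key2 : 0 ≤ (norm2 b) ^ 2 * norm2 wa ^ 2 - 2 * norm2 b * norm2 a * (wa ⬝ᵥ wb)
      + (norm2 a) ^ 2 * norm2 wb ^ 2 := by
    have := norm2_sq_comb (norm2 b) (-(norm2 a)) wa wb
    nlinarith [sq_nonneg (norm2 (norm2 b • wa + (-(norm2 a)) • wb))]
  have hu : norm2 (norm2 b • a + norm2 a • b) ^ 2 ≤ 4 * norm2 a ^ 2 * norm2 b ^ 2 := by
    rw [norm2_sq_comb]
    have hd := dot_le a b
    nlinarith [mul_le_mul_of_nonneg_left hd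
      (show (0:ℝ) ≤ 2 * norm2 b * norm2 a by positivity)]
  have h4 : 4 * (norm2 a * norm2 b) * (wa ⬝ᵥ wb)
      ≤ 4 * (norm2 a * norm2 b) * (γ * (norm2 a * norm2 b)) := by
    nlinarith [key, key2, hu, mul_le_mul_of_nonneg_left hu hγ0]
  have hαβ : (0:ℝ) < 4 * (norm2 a * norm2 b) := by nlinarith [mul_pos ha0 hb0]
  exact le_of_mul_le_mul_left h4 hαβ

lemma proj_restrict_bound (hA : IsUnit (A * Aᴴ).det) {t : ℕ} {v : Fin Nn → ℝ}
    (U : Finset (Fin Nn))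
    (hsp : ∀ c d : ℝ, sparse t
      (c • v + d • restrict U (v - (Aᴴ * (A * Aᴴ)⁻¹ * A).mulVec v))) :
    norm2 (restrict U (v - (Aᴴ * (A * Aᴴ)⁻¹ * A).mulVec v))
      ≤ pripConst A t * norm2 v := by
  set P := Aᴴ * (A * Aᴴ)⁻¹ * A with hP
  set w := v - P.mulVec v with hw
  set g := restrict U w with hg
  have hPw : P.mulVec w = 0 := by
    rw [hw, Matrix.mulVec_sub, Matrix.mulVec_mulVec, P_idem A hA, sub_self]
  have step1 : w ⬝ᵥ g = w ⬝ᵥ (g - P.mulVec g) := by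
    rw [dotProduct_sub]
    have : w ⬝ᵥ P.mulVec g = 0 := by
      rw [show w ⬝ᵥ P.mulVec g = (P.mulVec w) ⬝ᵥ g from ?_, hPw, zero_dotProduct]
      rw [dotProduct_comm, dot_adj, dotProduct_comm, hP, P_herm]
    rw [this, sub_zero]
  have step2 : w ⬝ᵥ (g - P.mulVec g) ≤ pripConst A t * (norm2 v * norm2 g) := by
    rw [hw]
    exact proj_cross A hA hsp
  have step3 : norm2 g ^ 2 ≤ pripConst A t * norm2 v * norm2 g := by
    have := dot_self_restrict w U
    rw [← hg] at this
    calc norm2 g ^ 2 = w ⬝ᵥ g := this.symm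
      _ = w ⬝ᵥ (g - P.mulVec g) := step1
      _ ≤ pripConst A t * (norm2 v * norm2 g) := step2
      _ = pripConst A t * norm2 v * norm2 g := by ring
  exact norm2_le_of_dot (mul_nonneg (pripConst_nonneg A t) (norm2_nonneg v)) step3

end Chunk3

section Chunk4
variable {Mm Nn : ℕ} (A : Matrix (Fin Mm) (Fin Nn) ℝ)

lemma rip_upper_norm (B : Matrix (Fin Mm) (Fin Nn) ℝ) {t : ℕ} {g : Fin Nn → ℝ}
    (hg : sparse t g) :
    norm2 (B.mulVec g) ≤ Real.sqrt (1 + ripConst B t) * norm2 g := by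
  have h := rip_upper B hg
  have h1 : norm2 (B.mulVec g) = Real.sqrt (norm2 (B.mulVec g) ^ 2) :=
    (Real.sqrt_sq (norm2_nonneg _)).symm
  rw [h1]
  calc Real.sqrt (norm2 (B.mulVec g) ^ 2)
      ≤ Real.sqrt ((1 + ripConst B t) * norm2 g ^ 2) := Real.sqrt_le_sqrt h
    _ = Real.sqrt (1 + ripConst B t) * norm2 g := by
        rw [Real.sqrt_mul, Real.sqrt_sq (norm2_nonneg _)]
        nlinarith [ripConst_nonneg B t, sq_nonneg (norm2 g), norm2_sq_dot g,
          norm2_sq_dot (B.mulVec g), rip_upper B hg, sq_nonneg (norm2 (B.mulVec g))]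

lemma one_add_rip_nonneg (B : Matrix (Fin Mm) (Fin Nn) ℝ) (t : ℕ) :
    (0:ℝ) ≤ 1 + ripConst B t := by nlinarith [ripConst_nonneg B t]

lemma h_restrict_bound (hA : IsUnit (A * Aᴴ).det) {t : ℕ} (U : Finset (Fin Nn))
    (hU : U.card ≤ t) (e : Fin Mm → ℝ) :
    norm2 (restrict U ((Aᴴ * (A * Aᴴ)⁻¹).mulVec e))
      ≤ Real.sqrt (1 + thetaConst A t) * norm2 e := by
  set h := (Aᴴ * (A * Aᴴ)⁻¹).mulVec e with hh
  set g := restrict U h with hg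
  have hgs : sparse t g := sparse_restrict U h hU
  have step1 : h ⬝ᵥ g = e ⬝ᵥ (((A * Aᴴ)⁻¹ * A).mulVec g) := by
    rw [hh, dot_adj]
    congr 1
    rw [Matrix.conjTranspose_mul, Matrix.conjTranspose_conjTranspose, Ginv_herm]
  have step2 : e ⬝ᵥ (((A * Aᴴ)⁻¹ * A).mulVec g)
      ≤ norm2 e * (Real.sqrt (1 + thetaConst A t) * norm2 g) :=
    (dot_le _ _).trans (mul_le_mul_of_nonneg_left
      (by rw [thetaConst] at *; exact rip_upper_norm _ hgs) (norm2_nonneg e))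
  have step3 : norm2 g ^ 2 ≤ (Real.sqrt (1 + thetaConst A t) * norm2 e) * norm2 g := by
    rw [← dot_self_restrict h U, ← hg]
    calc h ⬝ᵥ g = e ⬝ᵥ (((A * Aᴴ)⁻¹ * A).mulVec g) := step1
      _ ≤ norm2 e * (Real.sqrt (1 + thetaConst A t) * norm2 g) := step2
      _ = (Real.sqrt (1 + thetaConst A t) * norm2 e) * norm2 g := by ring
  exact norm2_le_of_dot
    (mul_nonneg (Real.sqrt_nonneg _) (norm2_nonneg e)) step3

lemma AtA_restrict_bound {t' k' : ℕ} (T : Finset (Fin Nn)) (hT : T.card ≤ k')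
    {u : Fin Nn → ℝ} (hu : sparse t' u) :
    norm2 (restrict T (Aᴴ.mulVec (A.mulVec u)))
      ≤ Real.sqrt (1 + ripConst A t') * Real.sqrt (1 + ripConst A k') * norm2 u := by
  set g := restrict T (Aᴴ.mulVec (A.mulVec u)) with hg
  have hgs : sparse k' g := sparse_restrict T _ hT
  have step1 : (Aᴴ.mulVec (A.mulVec u)) ⬝ᵥ g = (A.mulVec u) ⬝ᵥ (A.mulVec g) :=
    adj_dot A (A.mulVec u) g
  have step3 : norm2 g ^ 2
      ≤ (Real.sqrt (1 + ripConst A t') * Real.sqrt (1 + ripConst A k') * norm2 u) * norm2 g := by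
    rw [← dot_self_restrict (Aᴴ.mulVec (A.mulVec u)) T, ← hg, step1]
    calc (A.mulVec u) ⬝ᵥ (A.mulVec g) ≤ norm2 (A.mulVec u) * norm2 (A.mulVec g) := dot_le _ _
      _ ≤ (Real.sqrt (1 + ripConst A t') * norm2 u) *
            (Real.sqrt (1 + ripConst A k') * norm2 g) := by
          apply mul_le_mul (rip_upper_norm A hu) (rip_upper_norm A hgs)
            (norm2_nonneg _) (mul_nonneg (Real.sqrt_nonneg _) (norm2_nonneg _))
      _ = (Real.sqrt (1 + ripConst A t') * Real.sqrt (1 + ripConst A k') * norm2 u) * norm2 g := by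
          ring
  exact norm2_le_of_dot
    (mul_nonneg (mul_nonneg (Real.sqrt_nonneg _) (Real.sqrt_nonneg _)) (norm2_nonneg u)) step3

lemma Ae_restrict_bound {k' : ℕ} (T : Finset (Fin Nn)) (hT : T.card ≤ k') (e : Fin Mm → ℝ) :
    norm2 (restrict T (Aᴴ.mulVec e)) ≤ Real.sqrt (1 + ripConst A k') * norm2 e := by
  set g := restrict T (Aᴴ.mulVec e) with hg
  have hgs : sparse k' g := sparse_restrict T _ hT
  have step3 : norm2 g ^ 2 ≤ (Real.sqrt (1 + ripConst A k') * norm2 e) * norm2 g := by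
    rw [← dot_self_restrict (Aᴴ.mulVec e) T, ← hg, adj_dot]
    calc e ⬝ᵥ (A.mulVec g) ≤ norm2 e * norm2 (A.mulVec g) := dot_le _ _
      _ ≤ norm2 e * (Real.sqrt (1 + ripConst A k') * norm2 g) :=
          mul_le_mul_of_nonneg_left (rip_upper_norm A hgs) (norm2_nonneg e)
      _ = (Real.sqrt (1 + ripConst A k') * norm2 e) * norm2 g := by ring
  exact norm2_le_of_dot (mul_nonneg (Real.sqrt_nonneg _) (norm2_nonneg e)) step3

lemma ht_compare {n : ℕ} (z : Fin n → ℝ) (S T : Finset (Fin n)) (hST : S.card ≤ T.card)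
    (hbig : ∀ i ∈ T, ∀ j ∉ T, |z j| ≤ |z i|) :
    ∑ j ∈ S \ T, z j ^ 2 ≤ ∑ i ∈ T \ S, z i ^ 2 := by
  have hcard : (S \ T).card ≤ (T \ S).card := by
    have h1 := Finset.card_sdiff_add_card_inter S T
    have h2 := Finset.card_sdiff_add_card_inter T S
    rw [Finset.inter_comm] at h2
    omega
  rcases Finset.eq_empty_or_nonempty (T \ S) with hTS | hTS
  · have : (S \ T).card = 0 := by rw [hTS] at hcard; simpa using hcard
    rw [Finset.card_eq_zero] at this
    rw [this, hTS]
  · obtain ⟨i₀, hi₀, hmin⟩ := Finset.exists_min_image (T \ S) (fun i => z i ^ 2) hTS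
    have hi₀T : i₀ ∈ T := (Finset.mem_sdiff.1 hi₀).1
    have step1 : ∑ j ∈ S \ T, z j ^ 2 ≤ (S \ T).card • (z i₀ ^ 2) := by
      refine Finset.sum_le_card_nsmul _ _ _ fun j hj => ?_
      have hjT : j ∉ T := (Finset.mem_sdiff.1 hj).2
      have := hbig i₀ hi₀T j hjT
      calc z j ^ 2 = |z j| ^ 2 := (sq_abs _).symm
        _ ≤ |z i₀| ^ 2 := by nlinarith [abs_nonneg (z j), abs_nonneg (z i₀)]
        _ = z i₀ ^ 2 := sq_abs _
    have step2 : (S \ T).card • (z i₀ ^ 2) ≤ (T \ S).card • (z i₀ ^ 2) := by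
      rw [nsmul_eq_mul, nsmul_eq_mul]
      exact mul_le_mul_of_nonneg_right (by exact_mod_cast hcard) (sq_nonneg _)
    have step3 : (T \ S).card • (z i₀ ^ 2) ≤ ∑ i ∈ T \ S, z i ^ 2 :=
      Finset.card_nsmul_le_sum _ _ _ fun i hi => hmin i hi
    linarith

end Chunk4

section Chunk5
variable {n : ℕ}

lemma restrict_add (T : Finset (Fin n)) (p q : Fin n → ℝ) :
    restrict T (p + q) = restrict T p + restrict T q := by
  funext i; simp only [restrict, Pi.add_apply]; split <;> simp

lemma restrict_sub (T : Finset (Fin n)) (p q : Fin n → ℝ) :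
    restrict T (p - q) = restrict T p - restrict T q := by
  funext i; simp only [restrict, Pi.sub_apply]; split <;> simp

lemma restrict_neg (T : Finset (Fin n)) (p : Fin n → ℝ) :
    restrict T (-p) = - restrict T p := by
  funext i; simp only [restrict, Pi.neg_apply]; split <;> simp

lemma norm2_restrict_union_le (U V : Finset (Fin n)) (hUV : Disjoint U V) (z : Fin n → ℝ) :
    norm2 (restrict U z) + norm2 (restrict V z)
      ≤ Real.sqrt 2 * norm2 (restrict (U ∪ V) z) := by
  set a := norm2 (restrict U z) with ha
  set b := norm2 (restrict V z) with hb
  have ha0 : 0 ≤ a := norm2_nonneg _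
  have hb0 : 0 ≤ b := norm2_nonneg _
  have hsum : norm2 (restrict (U ∪ V) z) ^ 2 = a ^ 2 + b ^ 2 := by
    rw [ha, hb, norm2_restrict_sq, norm2_restrict_sq, norm2_restrict_sq,
      Finset.sum_union hUV]
  have h1 : (a + b) ^ 2 ≤ 2 * (a ^ 2 + b ^ 2) := by nlinarith [sq_nonneg (a - b)]
  calc a + b = Real.sqrt ((a + b) ^ 2) := (Real.sqrt_sq (by linarith)).symm
    _ ≤ Real.sqrt (2 * (a ^ 2 + b ^ 2)) := Real.sqrt_le_sqrt h1
    _ = Real.sqrt 2 * Real.sqrt (a ^ 2 + b ^ 2) := Real.sqrt_mul (by norm_num) _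
    _ = Real.sqrt 2 * norm2 (restrict (U ∪ V) z) := by
        rw [← hsum, Real.sqrt_sq (norm2_nonneg _)]

lemma norm2_sub_le (p q : Fin n → ℝ) : norm2 (p - q) ≤ norm2 p + norm2 q := by
  have := norm2_add_le p (-q)
  rw [norm2_neg] at this
  simpa [sub_eq_add_neg] using this

end Chunk5

end S9

set_option maxHeartbeats 2000000 in
open S9 in
theorem stmt9 {M N : ℕ} (A : Matrix (Fin M) (Fin N) ℝ) (hA : IsUnit (A * Aᴴ).det)
    (s k : ℕ) (hks : k ≥ s) (hδ : ripConst A k < 1)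
    (x : Fin N → ℝ) (hx : sparse s x) (e : Fin M → ℝ) (y : Fin M → ℝ)
    (hy : y = A.mulVec x + e)
    (lam : ℝ) (hlam : 0 < lam)
    (μprev : Fin N → ℝ) (hμprev : sparse (k - 1) μprev)
    (xk : Fin N → ℝ)
    (hxk : xk = μprev + (Aᴴ * (A * Aᴴ)⁻¹).mulVec (y - A.mulVec μprev))
    (Tk : Finset (Fin N)) (hTcard : Tk.card = k)
    (hTbig : ∀ i ∈ Tk, ∀ j ∉ Tk, |xk j| ≤ |xk i|)
    (μk : Fin N → ℝ)
    (hμk : μk = restrict Tk xk +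
      lam⁻¹ • restrict Tk (Aᴴ.mulVec (y - A.mulVec (restrict Tk xk)))) :
    norm2 (x - μk) ≤
      2 * Real.sqrt 2 * pripConst A (2 * k + s - 1) *
        (1 + (1 + ripConst A k) * Real.sqrt (1 + ripConst A (s + k)) /
          (lam * Real.sqrt (1 - ripConst A k))) * norm2 (x - μprev) +
      ((1 + (1 + ripConst A k) * Real.sqrt (1 + ripConst A (s + k)) /
          (lam * Real.sqrt (1 - ripConst A k))) *
        (Real.sqrt (2 + 2 * thetaConst A (k + s)) + Real.sqrt (1 + thetaConst A k)) +
        (1 + ripConst A k) / (lam * Real.sqrt (1 - ripConst A k))) * norm2 e := by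
  classical
  -- abbreviations
  set γ := pripConst A (2 * k + s - 1) with hγdef
  set δ := ripConst A k with hδdef
  set δ' := ripConst A (s + k) with hδ'def
  set θ1 := thetaConst A k with hθ1def
  set θ2 := thetaConst A (k + s) with hθ2def
  have hγ0 : 0 ≤ γ := pripConst_nonneg A _
  have hδ0 : 0 ≤ δ := ripConst_nonneg A _
  have hδ'0 : 0 ≤ δ' := ripConst_nonneg A _
  set v := x - μprev with hv
  set w := v - (Aᴴ * (A * Aᴴ)⁻¹ * A).mulVec v with hw
  set hvec := (Aᴴ * (A * Aᴴ)⁻¹).mulVec e with hhvec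
  set S := Finset.univ.filter (fun i => x i ≠ 0) with hSdef
  set Sμ := Finset.univ.filter (fun i => μprev i ≠ 0) with hSμdef
  have hScard : S.card ≤ s := hx
  have hSμcard : Sμ.card ≤ k - 1 := hμprev
  have hxS : ∀ i, i ∉ S → x i = 0 := by
    intro i hi
    by_contra hxi
    exact hi (Finset.mem_filter.2 ⟨Finset.mem_univ i, hxi⟩)
  have hμS : ∀ i, i ∉ Sμ → μprev i = 0 := by
    intro i hi
    by_contra hxi
    exact hi (Finset.mem_filter.2 ⟨Finset.mem_univ i, hxi⟩)
  -- x - xk = w - hvec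
  have hxxk : x - xk = w - hvec := by
    rw [hw, hhvec, hxk, hy, hv]
    have h1 : A.mulVec x + e - A.mulVec μprev = A.mulVec (x - μprev) + e := by
      rw [Matrix.mulVec_sub]; abel
    rw [h1, Matrix.mulVec_add, Matrix.mulVec_mulVec]
    abel
  -- the superset W
  set W := S ∪ Sμ ∪ Tk with hWdef
  have hWcard : W.card ≤ 2 * k + s - 1 := by
    rw [hWdef]
    have h1 := Finset.card_union_le (S ∪ Sμ) Tk
    have h2 := Finset.card_union_le S Sμ
    rw [hTcard] at h1
    omega
  have hvW : ∀ i, i ∉ W → v i = 0 := by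
    intro i hi
    rw [hWdef] at hi
    simp only [Finset.mem_union, not_or] at hi
    rw [hv]
    simp [hxS i hi.1.1, hμS i hi.1.2]
  -- sparsity helper for proj_restrict_bound
  have hsp_gen : ∀ U : Finset (Fin N), U ⊆ W →
      ∀ c d : ℝ, sparse (2 * k + s - 1) (c • v + d • restrict U w) := by
    intro U hU c d
    refine sparse_of_subset (fun i hi => ?_) hWcard
    by_contra hiW
    apply hi
    have hvi := hvW i hiW
    have hUi : i ∉ U := fun h => hiW (hU h)
    simp [Pi.add_apply, Pi.smul_apply, hvi, restrict, hUi]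
  -- bound on restrict U w
  have hwbound : ∀ U : Finset (Fin N), U ⊆ W →
      norm2 (restrict U w) ≤ γ * norm2 v := by
    intro U hU
    rw [hγdef, hw]
    exact proj_restrict_bound A hA U (by rw [← hw]; exact hsp_gen U hU)
  -- bound on restrict U hvec
  have hhbound : ∀ (t : ℕ) (U : Finset (Fin N)), U.card ≤ t →
      norm2 (restrict U hvec) ≤ Real.sqrt (1 + thetaConst A t) * norm2 e := by
    intro t U hU
    rw [hhvec]
    exact h_restrict_bound A hA U hU e
  -- Step 2: hard thresholding bound
  set u := x - restrict Tk xk with hu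
  have hTsub : Tk ⊆ W := by rw [hWdef]; exact Finset.subset_union_right
  have hU2sub : (S \ Tk) ∪ (Tk \ S) ⊆ W := by
    rw [hWdef]
    intro i hi
    rcases Finset.mem_union.1 hi with h' | h'
    · exact Finset.mem_union.2 (Or.inl (Finset.mem_union.2 (Or.inl (Finset.mem_sdiff.1 h').1)))
    · exact Finset.mem_union.2 (Or.inr (Finset.mem_sdiff.1 h').1)
  have hdisj : Disjoint (S \ Tk) (Tk \ S) := disjoint_sdiff_sdiff
  have hudecomp : u = restrict Tk (x - xk) + restrict (S \ Tk) x := by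
    funext i
    by_cases hiT : i ∈ Tk
    · have hnot : i ∉ S \ Tk := fun hmem => (Finset.mem_sdiff.1 hmem).2 hiT
      simp [hu, restrict, hiT, hnot]
    · by_cases hiS : i ∈ S
      · simp [hu, restrict, hiT, Finset.mem_sdiff, hiS]
      · simp [hu, restrict, hiT, Finset.mem_sdiff, hiS, hxS i hiS]
  have bT : norm2 (restrict Tk (x - xk)) ≤ γ * norm2 v + Real.sqrt (1 + θ1) * norm2 e := by
    rw [hxxk, restrict_sub]
    refine (norm2_sub_le _ _).trans (add_le_add (hwbound Tk hTsub) ?_)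
    rw [hθ1def]
    exact hhbound k Tk (le_of_eq hTcard)
  have bU2 : norm2 (restrict ((S \ Tk) ∪ (Tk \ S)) (x - xk))
      ≤ γ * norm2 v + Real.sqrt (1 + θ2) * norm2 e := by
    rw [hxxk, restrict_sub]
    refine (norm2_sub_le _ _).trans (add_le_add (hwbound _ hU2sub) ?_)
    rw [hθ2def]
    refine hhbound (k + s) _ ?_
    have h1 := Finset.card_union_le (S \ Tk) (Tk \ S)
    have h2 : (S \ Tk).card ≤ S.card := Finset.card_le_card (Finset.sdiff_subset)
    have h3 : (Tk \ S).card ≤ Tk.card := Finset.card_le_card (Finset.sdiff_subset)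
    omega
  have n4 : norm2 (restrict (S \ Tk) xk) ≤ norm2 (restrict (Tk \ S) xk) := by
    have hc := ht_compare xk S Tk (by omega) hTbig
    calc norm2 (restrict (S \ Tk) xk) = Real.sqrt (∑ j ∈ S \ Tk, xk j ^ 2) := by
          rw [← norm2_restrict_sq, Real.sqrt_sq (norm2_nonneg _)]
      _ ≤ Real.sqrt (∑ i ∈ Tk \ S, xk i ^ 2) := Real.sqrt_le_sqrt hc
      _ = norm2 (restrict (Tk \ S) xk) := by
          rw [← norm2_restrict_sq, Real.sqrt_sq (norm2_nonneg _)]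
  have n5 : norm2 (restrict (Tk \ S) xk) = norm2 (restrict (Tk \ S) (x - xk)) := by
    have heq : restrict (Tk \ S) xk = - restrict (Tk \ S) (x - xk) := by
      funext i
      by_cases hi : i ∈ Tk \ S
      · have hiS : i ∉ S := (Finset.mem_sdiff.1 hi).2
        simp [restrict, hi, hxS i hiS]
      · simp [restrict, hi]
    rw [heq, norm2_neg]
  have key_u : norm2 u ≤ (1 + Real.sqrt 2) * (γ * norm2 v)
      + (Real.sqrt 2 * Real.sqrt (1 + θ2) + Real.sqrt (1 + θ1)) * norm2 e := by
    have t1 : norm2 u ≤ norm2 (restrict Tk (x - xk)) + norm2 (restrict (S \ Tk) x) := by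
      rw [hudecomp]; exact norm2_add_le _ _
    have t2 : norm2 (restrict (S \ Tk) x)
        ≤ norm2 (restrict (S \ Tk) (x - xk)) + norm2 (restrict (Tk \ S) (x - xk)) := by
      have hxsplit : restrict (S \ Tk) x
          = restrict (S \ Tk) (x - xk) + restrict (S \ Tk) xk := by
        rw [← restrict_add, sub_add_cancel]
      calc norm2 (restrict (S \ Tk) x)
          ≤ norm2 (restrict (S \ Tk) (x - xk)) + norm2 (restrict (S \ Tk) xk) := by
            rw [hxsplit]; exact norm2_add_le _ _
        _ ≤ _ := add_le_add le_rfl (n4.trans_eq n5)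
    have t3 : norm2 (restrict (S \ Tk) (x - xk)) + norm2 (restrict (Tk \ S) (x - xk))
        ≤ Real.sqrt 2 * norm2 (restrict ((S \ Tk) ∪ (Tk \ S)) (x - xk)) :=
      norm2_restrict_union_le _ _ hdisj _
    have t4 : Real.sqrt 2 * norm2 (restrict ((S \ Tk) ∪ (Tk \ S)) (x - xk))
        ≤ Real.sqrt 2 * (γ * norm2 v + Real.sqrt (1 + θ2) * norm2 e) :=
      mul_le_mul_of_nonneg_left bU2 (Real.sqrt_nonneg 2)
    calc norm2 u ≤ norm2 (restrict Tk (x - xk))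
          + Real.sqrt 2 * (γ * norm2 v + Real.sqrt (1 + θ2) * norm2 e) := by linarith
      _ ≤ (γ * norm2 v + Real.sqrt (1 + θ1) * norm2 e)
          + Real.sqrt 2 * (γ * norm2 v + Real.sqrt (1 + θ2) * norm2 e) := by linarith [bT]
      _ = (1 + Real.sqrt 2) * (γ * norm2 v)
          + (Real.sqrt 2 * Real.sqrt (1 + θ2) + Real.sqrt (1 + θ1)) * norm2 e := by ring
  -- Step 3: feedback
  have huS : ∀ i, i ∉ S ∪ Tk → u i = 0 := by
    intro i hi
    simp only [Finset.mem_union, not_or] at hi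
    rw [hu]
    simp [restrict, hi.2, hxS i hi.1]
  have hu_sp : sparse (s + k) u := by
    refine sparse_of_subset (U := S ∪ Tk) (fun i hi => ?_)
      (by have := Finset.card_union_le S Tk; omega)
    by_contra hiW; exact hi (huS i hiW)
  have hy2 : y - A.mulVec (restrict Tk xk) = A.mulVec u + e := by
    rw [hy, hu, Matrix.mulVec_sub]; abel
  have hfb : x - μk = u - lam⁻¹ • (restrict Tk (Aᴴ.mulVec (A.mulVec u))
      + restrict Tk (Aᴴ.mulVec e)) := by
    rw [hμk, hy2, Matrix.mulVec_add, restrict_add, hu]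
    abel
  have n8 : norm2 (restrict Tk (Aᴴ.mulVec (A.mulVec u)))
      ≤ Real.sqrt (1 + δ') * Real.sqrt (1 + δ) * norm2 u := by
    rw [hδ'def, hδdef]
    exact AtA_restrict_bound A Tk (le_of_eq hTcard) hu_sp
  have n9 : norm2 (restrict Tk (Aᴴ.mulVec e)) ≤ Real.sqrt (1 + δ) * norm2 e := by
    rw [hδdef]; exact Ae_restrict_bound A Tk (le_of_eq hTcard) e
  have hil : 0 ≤ lam⁻¹ := le_of_lt (inv_pos.2 hlam)
  have hXbound : norm2 (x - μk)
      ≤ (1 + lam⁻¹ * (Real.sqrt (1 + δ') * Real.sqrt (1 + δ))) * norm2 u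
        + (lam⁻¹ * Real.sqrt (1 + δ)) * norm2 e := by
    rw [hfb]
    have hsm : norm2 (lam⁻¹ • (restrict Tk (Aᴴ.mulVec (A.mulVec u))
        + restrict Tk (Aᴴ.mulVec e)))
        = lam⁻¹ * norm2 (restrict Tk (Aᴴ.mulVec (A.mulVec u))
            + restrict Tk (Aᴴ.mulVec e)) := by
      rw [norm2_smul, abs_of_pos (inv_pos.2 hlam)]
    have hadd := norm2_add_le (restrict Tk (Aᴴ.mulVec (A.mulVec u)))
      (restrict Tk (Aᴴ.mulVec e))
    have chain := hadd.trans (add_le_add n8 n9)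
    calc norm2 (u - lam⁻¹ • (restrict Tk (Aᴴ.mulVec (A.mulVec u))
            + restrict Tk (Aᴴ.mulVec e)))
        ≤ norm2 u + norm2 (lam⁻¹ • (restrict Tk (Aᴴ.mulVec (A.mulVec u))
            + restrict Tk (Aᴴ.mulVec e))) := norm2_sub_le _ _
      _ = norm2 u + lam⁻¹ * norm2 (restrict Tk (Aᴴ.mulVec (A.mulVec u))
            + restrict Tk (Aᴴ.mulVec e)) := by rw [hsm]
      _ ≤ norm2 u + lam⁻¹ * (Real.sqrt (1 + δ') * Real.sqrt (1 + δ) * norm2 u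
            + Real.sqrt (1 + δ) * norm2 e) := by
          have := mul_le_mul_of_nonneg_left chain hil
          linarith
      _ = (1 + lam⁻¹ * (Real.sqrt (1 + δ') * Real.sqrt (1 + δ))) * norm2 u
            + (lam⁻¹ * Real.sqrt (1 + δ)) * norm2 e := by ring
  -- numeric lemmas
  have hs1 : 0 < Real.sqrt (1 - δ) := Real.sqrt_pos.2 (by linarith)
  have lem1 : lam⁻¹ * Real.sqrt (1 + δ) ≤ (1 + δ) / (lam * Real.sqrt (1 - δ)) := by
    have h1 : Real.sqrt (1 + δ) * Real.sqrt (1 - δ) = Real.sqrt ((1 + δ) * (1 - δ)) :=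
      (Real.sqrt_mul (by linarith) _).symm
    have h2 : Real.sqrt ((1 + δ) * (1 - δ)) ≤ 1 := by
      calc Real.sqrt ((1 + δ) * (1 - δ)) ≤ Real.sqrt 1 := Real.sqrt_le_sqrt (by nlinarith)
        _ = 1 := Real.sqrt_one
    have h3 : Real.sqrt (1 + δ) ≤ (1 + δ) / Real.sqrt (1 - δ) := by
      rw [le_div_iff₀ hs1]
      calc Real.sqrt (1 + δ) * Real.sqrt (1 - δ) = Real.sqrt ((1 + δ) * (1 - δ)) := h1
        _ ≤ 1 := h2
        _ ≤ 1 + δ := by linarith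
    calc lam⁻¹ * Real.sqrt (1 + δ) ≤ lam⁻¹ * ((1 + δ) / Real.sqrt (1 - δ)) :=
        mul_le_mul_of_nonneg_left h3 hil
      _ = (1 + δ) / (lam * Real.sqrt (1 - δ)) := by
          field_simp
  have lem2 : lam⁻¹ * (Real.sqrt (1 + δ') * Real.sqrt (1 + δ))
      ≤ (1 + δ) * Real.sqrt (1 + δ') / (lam * Real.sqrt (1 - δ)) := by
    have hmul := mul_le_mul_of_nonneg_left lem1 (Real.sqrt_nonneg (1 + δ'))
    calc lam⁻¹ * (Real.sqrt (1 + δ') * Real.sqrt (1 + δ))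
        = Real.sqrt (1 + δ') * (lam⁻¹ * Real.sqrt (1 + δ)) := by ring
      _ ≤ Real.sqrt (1 + δ') * ((1 + δ) / (lam * Real.sqrt (1 - δ))) := hmul
      _ = (1 + δ) * Real.sqrt (1 + δ') / (lam * Real.sqrt (1 - δ)) := by ring
  set C := (1 + δ) * Real.sqrt (1 + δ') / (lam * Real.sqrt (1 - δ)) with hC
  set D := (1 + δ) / (lam * Real.sqrt (1 - δ)) with hD
  have hC0 : 0 ≤ C := by
    rw [hC]
    exact div_nonneg (mul_nonneg (by linarith) (Real.sqrt_nonneg _))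
      (le_of_lt (mul_pos hlam hs1))
  have hD0 : 0 ≤ D := by
    rw [hD]
    exact div_nonneg (by linarith) (le_of_lt (mul_pos hlam hs1))
  have heq2 : Real.sqrt 2 * Real.sqrt (1 + θ2) = Real.sqrt (2 + 2 * θ2) := by
    rw [← Real.sqrt_mul (by norm_num : (0:ℝ) ≤ 2)]
    rw [show (2:ℝ) * (1 + θ2) = 2 + 2 * θ2 by ring]
  have hsqrt2 : 1 + Real.sqrt 2 ≤ 2 * Real.sqrt 2 := by
    nlinarith [Real.sq_sqrt (show (0:ℝ) ≤ 2 by norm_num), Real.sqrt_nonneg 2]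
  have hV0 : 0 ≤ norm2 v := norm2_nonneg v
  have hE0 : 0 ≤ norm2 e := norm2_nonneg e
  have hU0 : 0 ≤ norm2 u := norm2_nonneg u
  have step : norm2 (x - μk) ≤ (1 + C) * norm2 u + D * norm2 e := by
    refine hXbound.trans ?_
    exact add_le_add (mul_le_mul_of_nonneg_right (add_le_add le_rfl lem2) hU0)
      (mul_le_mul_of_nonneg_right lem1 hE0)
  have final1 : norm2 u ≤ (1 + Real.sqrt 2) * (γ * norm2 v)
      + (Real.sqrt (2 + 2 * θ2) + Real.sqrt (1 + θ1)) * norm2 e := by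
    rw [← heq2]; exact key_u
  have h1C : (0:ℝ) ≤ 1 + C := by linarith
  calc norm2 (x - μk) ≤ (1 + C) * norm2 u + D * norm2 e := step
    _ ≤ (1 + C) * ((1 + Real.sqrt 2) * (γ * norm2 v)
          + (Real.sqrt (2 + 2 * θ2) + Real.sqrt (1 + θ1)) * norm2 e) + D * norm2 e :=
        add_le_add (mul_le_mul_of_nonneg_left final1 h1C) le_rfl
    _ ≤ 2 * Real.sqrt 2 * γ * (1 + C) * norm2 v
          + ((1 + C) * (Real.sqrt (2 + 2 * θ2) + Real.sqrt (1 + θ1)) + D) * norm2 e := by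
        nlinarith [mul_le_mul_of_nonneg_right hsqrt2
          (mul_nonneg (mul_nonneg h1C hγ0) hV0)]
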